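/- Let w be a word that is 3-directed and contains no repetition of exponent greater than 19/10 with period at least 2. Then for every factor fs of w with |s| = 1, the palindromic extension f s f^R contains no square of period p ≥ 20 centered to the left of (or at) s. -/

import Mathlib

/-- A word `u` is `d`-directed if for every factor `f` of `u` of length `d`,
the reverse `f.reverse` is not a factor of `u`. -/
def DDirected {α : Type*} (d : ℕ) (u : List α) : Prop :=
  ∀ f : List α, f.length = d → f <:+: u → ¬ f.reverse <:+: u

/-- Let `w` be a 3-directed word containing no repetition of exponent greater
than `19/10` with period at least `2` (i.e. `w` is `((19/10)^+, 2)`-free).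
Then for every factor `f ++ s` of `w` with `|s| = 1`, the palindromic
extension `f ++ s ++ f.reverse` contains no square of period `p ≥ 20` whose
center lies to the left of (or at) the position of `s`. -/
theorem stmt_10 {α : Type*} (dflt : α) (w f s : List α)
    (hdir : DDirected 3 w)
    (hfree : ∀ i L p, 2 ≤ p → 19 * p < 10 * L → i + L ≤ w.length →
      ¬ (∀ j, j + p < L → w.getD (i + j) dflt = w.getD (i + j + p) dflt))
    (hfac : (f ++ s) <:+: w) (hs : s.length = 1) :
    ¬ ∃ i p, 20 ≤ p ∧ i + 2 * p ≤ (f ++ s ++ f.reverse).length ∧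
        i + p ≤ f.length ∧
        ∀ j < p, (f ++ s ++ f.reverse).getD (i + j) dflt =
          (f ++ s ++ f.reverse).getD (i + j + p) dflt := by
  rintro ⟨i, p, hp, hlen, hip, hsq⟩
  obtain ⟨pre, post, hw⟩ := hfac
  set n := f.length with hn
  set t := f ++ s with ht
  set v := f ++ s ++ f.reverse with hv
  have htlen : t.length = n + 1 := by simp [ht, hs, hn]
  have hvt : v = t ++ f.reverse := by simp [hv, ht]
  -- getD of v within the first part agrees with t
  have hA : ∀ k, k < n + 1 → v.getD k dflt = t.getD k dflt := by
    intro k hk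
    rw [hvt, List.getD_append _ _ _ _ (by omega)]
  -- getD of v in the reversed part
  have hB : ∀ k, k < n → v.getD (n + 1 + k) dflt = t.getD (n - 1 - k) dflt := by
    intro k hk
    rw [hvt, List.getD_append_right _ _ _ _ (by omega)]
    have h1 : n + 1 + k - t.length = k := by omega
    rw [h1]
    have hk' : k < f.reverse.length := by simp; omega
    rw [List.getD_eq_getElem _ _ hk', List.getElem_reverse,
      ← List.getD_eq_getElem f dflt (show f.length - 1 - k < f.length by omega)]
    rw [show f.length - 1 - k = n - 1 - k from by omega]
    rw [ht, List.getD_append _ _ _ _ (show n - 1 - k < f.length by omega)]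
  -- length of w
  have hwlen : w.length = pre.length + (n + 1) + post.length := by
    rw [← hw]; simp only [List.length_append, htlen]
  -- w agrees with t at offset pre.length
  have hwt : ∀ k, k < n + 1 → w.getD (pre.length + k) dflt = t.getD k dflt := by
    intro k hk
    rw [← hw, List.append_assoc, List.getD_append_right _ _ _ _ (by omega)]
    have h1 : pre.length + k - pre.length = k := by omega
    rw [h1, List.getD_append _ _ _ _ (by omega)]
  by_cases hcase : i + 2 * p ≤ n + 2
  · -- the square lies (almost) entirely inside `t`, contradicting freeness
    set L := min (2 * p) (n + 1 - i) with hL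
    refine hfree (pre.length + i) L p (by omega) (by omega) (by omega) ?_
    intro j hj
    have hjp : j < p := by omega
    have h1 : i + j < n + 1 := by omega
    have h2 : i + j + p < n + 1 := by omega
    have q1 : w.getD (pre.length + i + j) dflt = t.getD (i + j) dflt := by
      rw [show pre.length + i + j = pre.length + (i + j) from by omega]
      exact hwt _ h1
    have q2 : w.getD (pre.length + i + j + p) dflt = t.getD (i + j + p) dflt := by
      rw [show pre.length + i + j + p = pre.length + (i + j + p) from by omega]
      exact hwt _ h2
    rw [q1, q2, ← hA _ h1, ← hA _ h2]
    exact hsq j hjp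
  · -- the square sticks out at least 2 past the centre: contradicts 3-directedness
    push_neg at hcase
    have hn2 : 20 ≤ n := by omega
    -- three square equalities
    have e0 : v.getD (n - p) dflt = v.getD n dflt := by
      have h := hsq (n - p - i) (by omega)
      have h1 : i + (n - p - i) = n - p := by omega
      have h2 : n - p + p = n := by omega
      rwa [h1, h2] at h
    have e1 : v.getD (n + 1 - p) dflt = v.getD (n + 1) dflt := by
      have h := hsq (n + 1 - p - i) (by omega)
      have h1 : i + (n + 1 - p - i) = n + 1 - p := by omega
      have h2 : n + 1 - p + p = n + 1 := by omega
      rwa [h1, h2] at h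
    have e2 : v.getD (n + 2 - p) dflt = v.getD (n + 2) dflt := by
      have h := hsq (n + 2 - p - i) (by omega)
      have h1 : i + (n + 2 - p - i) = n + 2 - p := by omega
      have h2 : n + 2 - p + p = n + 2 := by omega
      rwa [h1, h2] at h
    -- getD values of t at the relevant positions
    have key0 : t.getD (n - p) dflt = t.getD n dflt := by
      rw [← hA _ (by omega), ← hA _ (by omega)]; exact e0
    have key1 : t.getD (n + 1 - p) dflt = t.getD (n - 1) dflt := by
      have hb := hB 0 (by omega)
      simp only [Nat.add_zero, Nat.sub_zero] at hb
      rw [← hA _ (by omega), e1, hb]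
    have key2 : t.getD (n + 2 - p) dflt = t.getD (n - 2) dflt := by
      have hb := hB 1 (by omega)
      rw [show n + 1 + 1 = n + 2 from by omega, show n - 1 - 1 = n - 2 from by omega] at hb
      rw [← hA _ (by omega), e2, hb]
    -- the two length-3 factors
    have hglen : (t.drop (n - 2)).length = 3 := by simp [htlen]; omega
    have hconv : ∀ m (hm : m < t.length), t[m]'hm = t.getD m dflt :=
      fun m hm => (List.getD_eq_getElem t dflt hm).symm
    have hrev : (t.drop (n - p)).take 3 = (t.drop (n - 2)).reverse := by
      apply List.ext_getElem (by simp [htlen]; omega)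
      intro k hk1 hk2
      have hk3 : k < 3 := by simp [htlen] at hk1; omega
      rw [List.getElem_take, List.getElem_drop, List.getElem_reverse, List.getElem_drop,
        hconv, hconv]
      rw [show (t.drop (n - 2)).length - 1 - k = 2 - k from by omega]
      interval_cases k
      · rw [show n - p + 0 = n - p from by omega, show n - 2 + 2 = n from by omega]
        exact key0
      · rw [show n - p + 1 = n + 1 - p from by omega, show n - 2 + 1 = n - 1 from by omega]
        exact key1
      · rw [show n - p + 2 = n + 2 - p from by omega, show n - 2 + 0 = n - 2 from by omega]
        exact key2
    -- both the factor and its reverse occur in w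
    have htw : t <:+: w := ⟨pre, post, hw⟩
    have hginf : t.drop (n - 2) <:+: w := ((List.drop_suffix _ _).isInfix).trans htw
    have hgrinf : (t.drop (n - 2)).reverse <:+: w := by
      rw [← hrev]
      exact (((List.take_prefix _ _).isInfix).trans
        ((List.drop_suffix _ _).isInfix)).trans htw
    exact hdir (t.drop (n - 2)) hglen hginf hgrinf
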